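/- Let X, Y, Z, A, B, C be jointly distributed finite discrete random variables whose distribution factorizes according to the triangle causal structure: P(x,y,z,a,b,c) = P(x|b,c)·P(y|a,c)·P(z|a,b)·P(a)·P(b)·P(c). Then I(X:Y) + I(X:Z) ≤ H(X). -/

import Mathlib

open Finset

/-- Probability that the random variable `X` takes value `x`, for weights `μ`. -/
noncomputable def prob {Ω α : Type} [Fintype Ω] [Fintype α] [DecidableEq α]
    (μ : Ω → ℝ) (X : Ω → α) (x : α) : ℝ :=
  ∑ ω, if X ω = x then μ ω else 0

/-- Shannon entropy (base 2) of a finite discrete random variable,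
with the convention `0 * log₂ 0 = 0` (since `Real.logb 2 0 = 0`). -/
noncomputable def ent {Ω α : Type} [Fintype Ω] [Fintype α] [DecidableEq α]
    (μ : Ω → ℝ) (X : Ω → α) : ℝ :=
  -∑ x, prob μ X x * Real.logb 2 (prob μ X x)

/-- `μ` is a probability mass function on the finite sample space `Ω`. -/
def IsPMF {Ω : Type} [Fintype Ω] (μ : Ω → ℝ) : Prop :=
  (∀ ω, 0 ≤ μ ω) ∧ ∑ ω, μ ω = 1

/-- Mutual information `I(X:Y) = H(X) + H(Y) - H(X,Y)`. -/
noncomputable def mutualInfo {Ω α β : Type} [Fintype Ω] [Fintype α] [Fintype β]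
    [DecidableEq α] [DecidableEq β] (μ : Ω → ℝ) (X : Ω → α) (Y : Ω → β) : ℝ :=
  ent μ X + ent μ Y - ent μ (fun ω => (X ω, Y ω))

/-- Conditional mutual information
`I(X:Y|Z) = H(X,Z) + H(Y,Z) - H(Z) - H(X,Y,Z)`. -/
noncomputable def condMutualInfo {Ω α β γ : Type} [Fintype Ω] [Fintype α] [Fintype β]
    [Fintype γ] [DecidableEq α] [DecidableEq β] [DecidableEq γ]
    (μ : Ω → ℝ) (X : Ω → α) (Y : Ω → β) (Z : Ω → γ) : ℝ :=
  ent μ (fun ω => (X ω, Z ω)) + ent μ (fun ω => (Y ω, Z ω)) - ent μ Z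
    - ent μ (fun ω => (X ω, Y ω, Z ω))

/-- Conditional entropy `H(X|Y) = H(X,Y) - H(Y)`. -/
noncomputable def condEnt {Ω α β : Type} [Fintype Ω] [Fintype α] [Fintype β]
    [DecidableEq α] [DecidableEq β] (μ : Ω → ℝ) (X : Ω → α) (Y : Ω → β) : ℝ :=
  ent μ (fun ω => (X ω, Y ω)) - ent μ Y


section Aux
variable {Ω α β γ : Type} [Fintype Ω] [Fintype α] [Fintype β] [Fintype γ]
  [DecidableEq α] [DecidableEq β] [DecidableEq γ]

lemma prob_nonneg {μ : Ω → ℝ} (hμ : ∀ ω, 0 ≤ μ ω) (X : Ω → α) (v : α) :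
    0 ≤ prob μ X v := by
  apply Finset.sum_nonneg; intro ω _; split <;> simp [hμ ω]

lemma sum_prob {μ : Ω → ℝ} (hμ : IsPMF μ) (X : Ω → α) :
    ∑ v, prob μ X v = 1 := by
  unfold prob; rw [Finset.sum_comm]
  simp [Finset.sum_ite_eq, hμ.2]

lemma prob_map (μ : Ω → ℝ) (W : Ω → α) (f : α → β) (bv : β) :
    prob μ (fun ω => f (W ω)) bv = ∑ av, if f av = bv then prob μ W av else 0 := by
  unfold prob
  have h : ∀ av : α, (if f av = bv then ∑ ω, if W ω = av then μ ω else 0 else 0)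
      = ∑ ω, if f av = bv then (if W ω = av then μ ω else 0) else 0 := by
    intro av; split_ifs <;> simp
  simp only [h]
  rw [Finset.sum_comm]
  apply Finset.sum_congr rfl
  intro ω _
  rw [Finset.sum_eq_single (W ω)]
  · simp
  · intro av _ hav; split_ifs with h1 h2 <;> simp_all
  · simp

lemma marg_fst (μ : Ω → ℝ) (X : Ω → α) (W : Ω → β) (w : β) :
    ∑ v, prob μ (fun ω => (X ω, W ω)) (v, w) = prob μ W w := by
  have h := prob_map μ (fun ω => (X ω, W ω)) Prod.snd w
  simp only [Fintype.sum_prod_type] at h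
  rw [show (fun ω => Prod.snd (X ω, W ω)) = W from rfl] at h
  rw [h]
  apply Finset.sum_congr rfl
  intro a _
  simp [Finset.sum_ite_eq']

lemma marg_snd (μ : Ω → ℝ) (X : Ω → α) (W : Ω → β) (v : α) :
    ∑ w, prob μ (fun ω => (X ω, W ω)) (v, w) = prob μ X v := by
  have h := prob_map μ (fun ω => (X ω, W ω)) Prod.fst v
  simp only [Fintype.sum_prod_type] at h
  rw [show (fun ω => Prod.fst (X ω, W ω)) = X from rfl] at h
  rw [h, Finset.sum_comm]
  simp [Finset.sum_ite_eq']

lemma prob_iff_congr {μ : Ω → ℝ} {W : Ω → α} {W' : Ω → β} {v : α} {w : β}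
    (h : ∀ ω, W ω = v ↔ W' ω = w) : prob μ W v = prob μ W' w := by
  unfold prob
  apply Finset.sum_congr rfl
  intro ω _
  exact if_congr (h ω) rfl rfl

lemma prob_swap_pair (μ : Ω → ℝ) (S : Ω → α) (T : Ω → β) (v : α) (w : β) :
    prob μ (fun ω => (T ω, S ω)) (w, v) = prob μ (fun ω => (S ω, T ω)) (v, w) := by
  apply prob_iff_congr; intro ω; simp only [Prod.mk.injEq]; tauto

lemma prob_swap23 (μ : Ω → ℝ) (S : Ω → α) (T : Ω → β) (U : Ω → γ) (v : α) (w : β) (u : γ) :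
    prob μ (fun ω => (S ω, U ω, T ω)) (v, u, w)
      = prob μ (fun ω => (S ω, T ω, U ω)) (v, w, u) := by
  apply prob_iff_congr; intro ω; simp only [Prod.mk.injEq]; tauto

lemma prob_swap13 (μ : Ω → ℝ) (S : Ω → α) (T : Ω → β) (U : Ω → γ) (v : α) (w : β) (u : γ) :
    prob μ (fun ω => (U ω, T ω, S ω)) (u, w, v)
      = prob μ (fun ω => (S ω, T ω, U ω)) (v, w, u) := by
  apply prob_iff_congr; intro ω; simp only [Prod.mk.injEq]; tauto

lemma prob_rot (μ : Ω → ℝ) (S : Ω → α) (T : Ω → β) (U : Ω → γ) (v : α) (w : β) (u : γ) :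
    prob μ (fun ω => (T ω, S ω, U ω)) (w, v, u)
      = prob μ (fun ω => (S ω, T ω, U ω)) (v, w, u) := by
  apply prob_iff_congr; intro ω; simp only [Prod.mk.injEq]; tauto

lemma ent_pair_comm (μ : Ω → ℝ) (S : Ω → α) (T : Ω → β) :
    ent μ (fun ω => (T ω, S ω)) = ent μ (fun ω => (S ω, T ω)) := by
  unfold ent
  congr 1
  apply Fintype.sum_equiv (Equiv.prodComm β α)
  intro ⟨w, v⟩
  rw [show (Equiv.prodComm β α) (w, v) = (v, w) from rfl, prob_swap_pair]

lemma ent_swap23 (μ : Ω → ℝ) (S : Ω → α) (T : Ω → β) (U : Ω → γ) :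
    ent μ (fun ω => (S ω, U ω, T ω)) = ent μ (fun ω => (S ω, T ω, U ω)) := by
  unfold ent
  congr 1
  apply Fintype.sum_equiv ((Equiv.refl α).prodCongr (Equiv.prodComm γ β))
  intro ⟨v, u, w⟩
  rw [show ((Equiv.refl α).prodCongr (Equiv.prodComm γ β)) (v, u, w) = (v, w, u) from rfl,
    prob_swap23]

lemma ent_swap13 (μ : Ω → ℝ) (S : Ω → α) (T : Ω → β) (U : Ω → γ) :
    ent μ (fun ω => (U ω, T ω, S ω)) = ent μ (fun ω => (S ω, T ω, U ω)) := by
  unfold ent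
  congr 1
  apply Fintype.sum_equiv ((Equiv.prodComm γ (β × α)).trans
    (((Equiv.prodComm β α).prodCongr (Equiv.refl γ)).trans (Equiv.prodAssoc α β γ)))
  intro ⟨u, w, v⟩
  rw [show ((Equiv.prodComm γ (β × α)).trans
    (((Equiv.prodComm β α).prodCongr (Equiv.refl γ)).trans (Equiv.prodAssoc α β γ)))
      (u, w, v) = (v, w, u) from rfl, prob_swap13]

lemma ent_rot (μ : Ω → ℝ) (S : Ω → α) (T : Ω → β) (U : Ω → γ) :
    ent μ (fun ω => (T ω, S ω, U ω)) = ent μ (fun ω => (S ω, T ω, U ω)) := by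
  unfold ent
  congr 1
  apply Fintype.sum_equiv ((Equiv.prodAssoc β α γ).symm.trans
    (((Equiv.prodComm β α).prodCongr (Equiv.refl γ)).trans (Equiv.prodAssoc α β γ)))
  intro ⟨w, v, u⟩
  rw [show ((Equiv.prodAssoc β α γ).symm.trans
    (((Equiv.prodComm β α).prodCongr (Equiv.refl γ)).trans (Equiv.prodAssoc α β γ)))
      (w, v, u) = (v, w, u) from rfl, prob_rot]

lemma marg_mid (μ : Ω → ℝ) (X : Ω → α) (Y : Ω → β) (Z : Ω → γ) (v : α) (u : γ) :
    prob μ (fun ω => (X ω, Z ω)) (v, u)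
      = ∑ w, prob μ (fun ω => (X ω, Y ω, Z ω)) (v, w, u) := by
  rw [← marg_fst μ Y (fun ω => (X ω, Z ω)) (v, u)]
  apply Finset.sum_congr rfl
  intro w _
  exact prob_rot μ X Y Z v w u

lemma sum_rot3 {M : Type} [AddCommMonoid M] (f : α → β → γ → M) :
    ∑ w, ∑ u, ∑ v, f v w u = ∑ v, ∑ w, ∑ u, f v w u := by
  calc ∑ w, ∑ u, ∑ v, f v w u = ∑ w, ∑ v, ∑ u, f v w u :=
        Finset.sum_congr rfl (fun w _ => Finset.sum_comm)
    _ = ∑ v, ∑ w, ∑ u, f v w u := Finset.sum_comm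

lemma sum_rot3' {M : Type} [AddCommMonoid M] (f : α → β → γ → M) :
    ∑ u, ∑ v, ∑ w, f v w u = ∑ v, ∑ w, ∑ u, f v w u := by
  calc ∑ u, ∑ v, ∑ w, f v w u = ∑ v, ∑ u, ∑ w, f v w u := Finset.sum_comm
    _ = ∑ v, ∑ w, ∑ u, f v w u := Finset.sum_congr rfl (fun v _ => Finset.sum_comm)

lemma sum_swap_inner {M : Type} [AddCommMonoid M] (f : α → β → γ → M) :
    ∑ v, ∑ u, ∑ w, f v w u = ∑ v, ∑ w, ∑ u, f v w u :=
  Finset.sum_congr rfl (fun v _ => Finset.sum_comm)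

lemma ent_triple_expand (μ : Ω → ℝ) (X : Ω → α) (Y : Ω → β) (Z : Ω → γ) :
    ent μ (fun ω => (X ω, Y ω, Z ω))
      = -∑ v, ∑ w, ∑ u, prob μ (fun ω => (X ω, Y ω, Z ω)) (v, w, u)
          * Real.logb 2 (prob μ (fun ω => (X ω, Y ω, Z ω)) (v, w, u)) := by
  unfold ent
  simp only [Fintype.sum_prod_type]

lemma ent_yz_expand (μ : Ω → ℝ) (X : Ω → α) (Y : Ω → β) (Z : Ω → γ) :
    ent μ (fun ω => (Y ω, Z ω))
      = -∑ v, ∑ w, ∑ u, prob μ (fun ω => (X ω, Y ω, Z ω)) (v, w, u)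
          * Real.logb 2 (prob μ (fun ω => (Y ω, Z ω)) (w, u)) := by
  unfold ent
  simp only [Fintype.sum_prod_type]
  rw [← sum_rot3 (fun v w u => prob μ (fun ω => (X ω, Y ω, Z ω)) (v, w, u)
      * Real.logb 2 (prob μ (fun ω => (Y ω, Z ω)) (w, u)))]
  congr 1
  apply Finset.sum_congr rfl; intro w _
  apply Finset.sum_congr rfl; intro u _
  set L := Real.logb 2 (prob μ (fun ω => (Y ω, Z ω)) (w, u)) with hL
  rw [← marg_fst μ X (fun ω => (Y ω, Z ω)) (w, u), Finset.sum_mul]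

lemma ent_xz_expand (μ : Ω → ℝ) (X : Ω → α) (Y : Ω → β) (Z : Ω → γ) :
    ent μ (fun ω => (X ω, Z ω))
      = -∑ v, ∑ w, ∑ u, prob μ (fun ω => (X ω, Y ω, Z ω)) (v, w, u)
          * Real.logb 2 (prob μ (fun ω => (X ω, Z ω)) (v, u)) := by
  unfold ent
  simp only [Fintype.sum_prod_type]
  rw [← sum_swap_inner (fun v w u => prob μ (fun ω => (X ω, Y ω, Z ω)) (v, w, u)
      * Real.logb 2 (prob μ (fun ω => (X ω, Z ω)) (v, u)))]
  congr 1
  apply Finset.sum_congr rfl; intro v _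
  apply Finset.sum_congr rfl; intro u _
  set L := Real.logb 2 (prob μ (fun ω => (X ω, Z ω)) (v, u)) with hL
  rw [marg_mid μ X Y Z v u, Finset.sum_mul]

lemma ent_z_expand (μ : Ω → ℝ) (X : Ω → α) (Y : Ω → β) (Z : Ω → γ) :
    ent μ Z
      = -∑ v, ∑ w, ∑ u, prob μ (fun ω => (X ω, Y ω, Z ω)) (v, w, u)
          * Real.logb 2 (prob μ Z u) := by
  unfold ent
  rw [← sum_rot3' (fun v w u => prob μ (fun ω => (X ω, Y ω, Z ω)) (v, w, u)
      * Real.logb 2 (prob μ Z u))]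
  congr 1
  apply Finset.sum_congr rfl; intro u _
  set L := Real.logb 2 (prob μ Z u) with hL
  rw [← marg_fst μ Y Z u, Finset.sum_mul]
  conv_rhs => rw [Finset.sum_comm]
  apply Finset.sum_congr rfl; intro w _
  rw [← marg_fst μ X (fun ω => (Y ω, Z ω)) (w, u), Finset.sum_mul]

lemma condMutualInfo_expand (μ : Ω → ℝ) (X : Ω → α) (Y : Ω → β) (Z : Ω → γ) :
    condMutualInfo μ X Y Z
      = ∑ v, ∑ w, ∑ u, prob μ (fun ω => (X ω, Y ω, Z ω)) (v, w, u)
          * (Real.logb 2 (prob μ (fun ω => (X ω, Y ω, Z ω)) (v, w, u))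
             + Real.logb 2 (prob μ Z u)
             - Real.logb 2 (prob μ (fun ω => (X ω, Z ω)) (v, u))
             - Real.logb 2 (prob μ (fun ω => (Y ω, Z ω)) (w, u))) := by
  unfold condMutualInfo
  rw [ent_triple_expand μ X Y Z, ent_yz_expand μ X Y Z, ent_xz_expand μ X Y Z,
    ent_z_expand μ X Y Z]
  simp only [mul_add, mul_sub, Finset.sum_add_distrib, Finset.sum_sub_distrib]
  ring

lemma ent_pair_expand (μ : Ω → ℝ) (X : Ω → α) (Y : Ω → β) :
    ent μ (fun ω => (X ω, Y ω))
      = -∑ v, ∑ w, prob μ (fun ω => (X ω, Y ω)) (v, w)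
          * Real.logb 2 (prob μ (fun ω => (X ω, Y ω)) (v, w)) := by
  unfold ent
  simp only [Fintype.sum_prod_type]

lemma ent_fst_expand (μ : Ω → ℝ) (X : Ω → α) (Y : Ω → β) :
    ent μ X
      = -∑ v, ∑ w, prob μ (fun ω => (X ω, Y ω)) (v, w) * Real.logb 2 (prob μ X v) := by
  unfold ent
  congr 1
  apply Finset.sum_congr rfl; intro v _
  set L := Real.logb 2 (prob μ X v) with hL
  rw [← marg_snd μ X Y v, Finset.sum_mul]

lemma ent_snd_expand (μ : Ω → ℝ) (X : Ω → α) (Y : Ω → β) :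
    ent μ Y
      = -∑ v, ∑ w, prob μ (fun ω => (X ω, Y ω)) (v, w) * Real.logb 2 (prob μ Y w) := by
  unfold ent
  rw [← Finset.sum_comm]
  congr 1
  apply Finset.sum_congr rfl; intro w _
  set L := Real.logb 2 (prob μ Y w) with hL
  rw [← marg_fst μ X Y w, Finset.sum_mul]

lemma mutualInfo_expand (μ : Ω → ℝ) (X : Ω → α) (Y : Ω → β) :
    mutualInfo μ X Y
      = ∑ v, ∑ w, prob μ (fun ω => (X ω, Y ω)) (v, w)
          * (Real.logb 2 (prob μ (fun ω => (X ω, Y ω)) (v, w))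
             - Real.logb 2 (prob μ X v) - Real.logb 2 (prob μ Y w)) := by
  unfold mutualInfo
  rw [ent_pair_expand μ X Y, ent_fst_expand μ X Y, ent_snd_expand μ X Y]
  simp only [mul_sub, Finset.sum_sub_distrib]
  ring

lemma condMutualInfo_nonneg {μ : Ω → ℝ} (hμ : IsPMF μ) (X : Ω → α) (Y : Ω → β)
    (Z : Ω → γ) : 0 ≤ condMutualInfo μ X Y Z := by
  have hμ0 := hμ.1
  rw [condMutualInfo_expand μ X Y Z]
  set p := fun v w u => prob μ (fun ω => (X ω, Y ω, Z ω)) (v, w, u) with hp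
  set pXZ := fun v u => prob μ (fun ω => (X ω, Z ω)) (v, u) with hpXZ
  set pYZ := fun w u => prob μ (fun ω => (Y ω, Z ω)) (w, u) with hpYZ
  set pZ := fun u => prob μ Z u with hpZdef
  have hp0 : ∀ v w u, 0 ≤ p v w u := fun v w u => prob_nonneg hμ0 _ _
  have hXZm : ∀ v u, pXZ v u = ∑ w, p v w u := fun v u => marg_mid μ X Y Z v u
  have hYZm : ∀ w u, pYZ w u = ∑ v, p v w u :=
    fun w u => (marg_fst μ X (fun ω => (Y ω, Z ω)) (w, u)).symm
  have hZX : ∀ u, pZ u = ∑ v, pXZ v u := fun u => (marg_fst μ X Z u).symm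
  have hZY : ∀ u, pZ u = ∑ w, pYZ w u := fun u => (marg_fst μ Y Z u).symm
  have hXZ0 : ∀ v u, 0 ≤ pXZ v u := fun v u => prob_nonneg hμ0 _ _
  have hYZ0 : ∀ w u, 0 ≤ pYZ w u := fun w u => prob_nonneg hμ0 _ _
  have hZ0 : ∀ u, 0 ≤ pZ u := fun u => prob_nonneg hμ0 _ _
  have hpleXZ : ∀ v w u, p v w u ≤ pXZ v u := by
    intro v w u
    rw [hXZm]
    exact Finset.single_le_sum (fun i _ => hp0 v i u) (Finset.mem_univ w)
  have hpleYZ : ∀ v w u, p v w u ≤ pYZ w u := by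
    intro v w u
    rw [hYZm]
    exact Finset.single_le_sum (fun i _ => hp0 i w u) (Finset.mem_univ v)
  have hYZleZ : ∀ w u, pYZ w u ≤ pZ u := by
    intro w u
    rw [hZY]
    exact Finset.single_le_sum (fun i _ => hYZ0 i u) (Finset.mem_univ w)
  have hplePZ : ∀ v w u, p v w u ≤ pZ u :=
    fun v w u => le_trans (hpleYZ v w u) (hYZleZ w u)
  have hlog2 : (0:ℝ) < Real.log 2 := Real.log_pos one_lt_two
  -- termwise lower bound
  have step1 : ∀ v w u,
      (if 0 < p v w u then p v w u - pXZ v u * pYZ w u / pZ u else 0) * (Real.log 2)⁻¹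
        ≤ p v w u * (Real.logb 2 (p v w u) + Real.logb 2 (pZ u)
            - Real.logb 2 (pXZ v u) - Real.logb 2 (pYZ w u)) := by
    intro v w u
    by_cases h : 0 < p v w u
    · have hZpos : 0 < pZ u := lt_of_lt_of_le h (hplePZ v w u)
      have hXZpos : 0 < pXZ v u := lt_of_lt_of_le h (hpleXZ v w u)
      have hYZpos : 0 < pYZ w u := lt_of_lt_of_le h (hpleYZ v w u)
      rw [if_pos h]
      have hs : 0 < p v w u * pZ u / (pXZ v u * pYZ w u) :=
        div_pos (mul_pos h hZpos) (mul_pos hXZpos hYZpos)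
      have hlog := Real.log_le_sub_one_of_pos (inv_pos.mpr hs)
      rw [Real.log_inv] at hlog
      have h1 : 1 - (p v w u * pZ u / (pXZ v u * pYZ w u))⁻¹
          ≤ Real.log (p v w u * pZ u / (pXZ v u * pYZ w u)) := by linarith
      have hlogs : Real.log (p v w u * pZ u / (pXZ v u * pYZ w u))
          = Real.log (p v w u) + Real.log (pZ u)
            - Real.log (pXZ v u) - Real.log (pYZ w u) := by
        rw [Real.log_div (by positivity) (by positivity),
          Real.log_mul h.ne' hZpos.ne', Real.log_mul hXZpos.ne' hYZpos.ne']
        ring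
      rw [hlogs] at h1
      have h2 := mul_le_mul_of_nonneg_left h1 (le_of_lt h)
      have h3 : p v w u * (1 - (p v w u * pZ u / (pXZ v u * pYZ w u))⁻¹)
          = p v w u - pXZ v u * pYZ w u / pZ u := by
        field_simp
      rw [h3] at h2
      have key := h2
      -- now divide by log 2
      have hrhs : p v w u * (Real.logb 2 (p v w u) + Real.logb 2 (pZ u)
            - Real.logb 2 (pXZ v u) - Real.logb 2 (pYZ w u))
          = (p v w u * (Real.log (p v w u) + Real.log (pZ u)
            - Real.log (pXZ v u) - Real.log (pYZ w u))) * (Real.log 2)⁻¹ := by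
        unfold Real.logb
        field_simp
      rw [hrhs]
      exact mul_le_mul_of_nonneg_right key (inv_nonneg.mpr hlog2.le)
    · rw [if_neg h]
      have hp' : p v w u = 0 := le_antisymm (not_lt.mp h) (hp0 v w u)
      simp [hp']
  refine le_trans ?_ (Finset.sum_le_sum (fun v _ => Finset.sum_le_sum (fun w _ =>
    Finset.sum_le_sum (fun u _ => step1 v w u))))
  -- it remains: 0 ≤ ∑∑∑ lower
  simp only [← Finset.sum_mul]
  apply mul_nonneg _ (inv_nonneg.mpr hlog2.le)
  have hsplit : ∀ (v : α) (w : β) (u : γ),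
      (if 0 < p v w u then p v w u - pXZ v u * pYZ w u / pZ u else 0)
        = (if 0 < p v w u then p v w u else 0)
          - (if 0 < p v w u then pXZ v u * pYZ w u / pZ u else 0) := by
    intro v w u; split_ifs <;> simp
  simp only [hsplit, Finset.sum_sub_distrib]
  have hT1 : ∑ v, ∑ w, ∑ u, (if 0 < p v w u then p v w u else 0) = 1 := by
    have h1 : ∀ (v : α) (w : β) (u : γ),
        (if 0 < p v w u then p v w u else 0) = p v w u := by
      intro v w u
      split_ifs with h
      · rfl
      · exact (le_antisymm (not_lt.mp h) (hp0 v w u)).symm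
    simp only [h1]
    have := sum_prob hμ (fun ω => (X ω, Y ω, Z ω))
    simpa only [Fintype.sum_prod_type] using this
  rw [hT1]
  have hT2 : ∑ v, ∑ w, ∑ u, (if 0 < p v w u then pXZ v u * pYZ w u / pZ u else 0)
      ≤ 1 := by
    have hmono : ∀ (v : α) (w : β) (u : γ),
        (if 0 < p v w u then pXZ v u * pYZ w u / pZ u else 0)
          ≤ (if 0 < pZ u then pXZ v u * pYZ w u / pZ u else 0) := by
      intro v w u
      by_cases h : 0 < p v w u
      · rw [if_pos h, if_pos (lt_of_lt_of_le h (hplePZ v w u))]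
      · rw [if_neg h]
        split_ifs with h2
        · exact div_nonneg (mul_nonneg (hXZ0 v u) (hYZ0 w u)) (hZ0 u)
        · exact le_refl 0
    refine le_trans (Finset.sum_le_sum (fun v _ => Finset.sum_le_sum (fun w _ =>
      Finset.sum_le_sum (fun u _ => hmono v w u)))) ?_
    rw [← sum_rot3' (fun v w u => if 0 < pZ u then pXZ v u * pYZ w u / pZ u else 0)]
    have hinner : ∀ u : γ,
        (∑ v, ∑ w, if 0 < pZ u then pXZ v u * pYZ w u / pZ u else 0)
          = if 0 < pZ u then pZ u else 0 := by
      intro u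
      by_cases h : 0 < pZ u
      · simp only [if_pos h]
        rw [show (∑ v, ∑ w, pXZ v u * pYZ w u / pZ u)
            = (∑ v, pXZ v u) * (∑ w, pYZ w u) / pZ u by
          rw [Finset.sum_mul_sum, Finset.sum_div]
          apply Finset.sum_congr rfl; intro v _
          rw [Finset.sum_div]]
        rw [← hZX u, ← hZY u]
        field_simp
      · simp only [if_neg h]
        simp
    simp only [hinner]
    have := sum_prob hμ Z
    calc (∑ u, if 0 < pZ u then pZ u else 0) ≤ ∑ u, pZ u := by
          apply Finset.sum_le_sum
          intro u _
          split_ifs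
          · exact le_refl _
          · exact hZ0 u
      _ = 1 := this
  linarith

lemma mutualInfo_eq_zero_of_indep {μ : Ω → ℝ} (X : Ω → α) (Y : Ω → β)
    (hind : ∀ v w, prob μ (fun ω => (X ω, Y ω)) (v, w) = prob μ X v * prob μ Y w) :
    mutualInfo μ X Y = 0 := by
  rw [mutualInfo_expand μ X Y]
  apply Finset.sum_eq_zero; intro v _
  apply Finset.sum_eq_zero; intro w _
  by_cases h : prob μ (fun ω => (X ω, Y ω)) (v, w) = 0
  · rw [h, zero_mul]
  · have hx : prob μ X v ≠ 0 := by
      intro h0; rw [hind, h0, zero_mul] at h; exact h rfl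
    have hy : prob μ Y w ≠ 0 := by
      intro h0; rw [hind, h0, mul_zero] at h; exact h rfl
    rw [hind, Real.logb_mul hx hy]
    ring

lemma condMutualInfo_eq_zero_of_condIndep {μ : Ω → ℝ} (hμ : IsPMF μ)
    (X : Ω → α) (Y : Ω → β) (Z : Ω → γ)
    (hind : ∀ v w u, prob μ (fun ω => (X ω, Y ω, Z ω)) (v, w, u) * prob μ Z u
      = prob μ (fun ω => (X ω, Z ω)) (v, u) * prob μ (fun ω => (Y ω, Z ω)) (w, u)) :
    condMutualInfo μ X Y Z = 0 := by
  rw [condMutualInfo_expand μ X Y Z]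
  apply Finset.sum_eq_zero; intro v _
  apply Finset.sum_eq_zero; intro w _
  apply Finset.sum_eq_zero; intro u _
  by_cases h : prob μ (fun ω => (X ω, Y ω, Z ω)) (v, w, u) = 0
  · rw [h, zero_mul]
  · have hppos : 0 < prob μ (fun ω => (X ω, Y ω, Z ω)) (v, w, u) :=
      lt_of_le_of_ne (prob_nonneg hμ.1 _ _) (Ne.symm h)
    have hZge : prob μ (fun ω => (X ω, Y ω, Z ω)) (v, w, u) ≤ prob μ Z u := by
      have h1 : prob μ (fun ω => (X ω, Y ω, Z ω)) (v, w, u)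
          ≤ prob μ (fun ω => (Y ω, Z ω)) (w, u) := by
        rw [← marg_fst μ X (fun ω => (Y ω, Z ω)) (w, u)]
        exact Finset.single_le_sum
          (f := fun i => prob μ (fun ω => (X ω, Y ω, Z ω)) (i, w, u))
          (fun i _ => prob_nonneg hμ.1 _ _) (Finset.mem_univ v)
      refine le_trans h1 ?_
      rw [← marg_fst μ Y Z u]
      exact Finset.single_le_sum
        (f := fun i => prob μ (fun ω => (Y ω, Z ω)) (i, u))
        (fun i _ => prob_nonneg hμ.1 _ _) (Finset.mem_univ w)
    have hZpos : 0 < prob μ Z u := lt_of_lt_of_le hppos hZge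
    have hmulne : prob μ (fun ω => (X ω, Z ω)) (v, u)
        * prob μ (fun ω => (Y ω, Z ω)) (w, u) ≠ 0 := by
      rw [← hind]
      exact mul_ne_zero h hZpos.ne'
    have hXZne : prob μ (fun ω => (X ω, Z ω)) (v, u) ≠ 0 := fun h0 => hmulne (by rw [h0, zero_mul])
    have hYZne : prob μ (fun ω => (Y ω, Z ω)) (w, u) ≠ 0 := fun h0 => hmulne (by rw [h0, mul_zero])
    have hlogeq : Real.logb 2 (prob μ (fun ω => (X ω, Y ω, Z ω)) (v, w, u))
        + Real.logb 2 (prob μ Z u)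
        = Real.logb 2 (prob μ (fun ω => (X ω, Z ω)) (v, u))
          + Real.logb 2 (prob μ (fun ω => (Y ω, Z ω)) (w, u)) := by
      rw [← Real.logb_mul h hZpos.ne', ← Real.logb_mul hXZne hYZne, hind]
    rw [show Real.logb 2 (prob μ (fun ω => (X ω, Y ω, Z ω)) (v, w, u))
        + Real.logb 2 (prob μ Z u)
        - Real.logb 2 (prob μ (fun ω => (X ω, Z ω)) (v, u))
        - Real.logb 2 (prob μ (fun ω => (Y ω, Z ω)) (w, u))
      = Real.logb 2 (prob μ (fun ω => (X ω, Y ω, Z ω)) (v, w, u))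
        + Real.logb 2 (prob μ Z u)
        - (Real.logb 2 (prob μ (fun ω => (X ω, Z ω)) (v, u))
          + Real.logb 2 (prob μ (fun ω => (Y ω, Z ω)) (w, u))) by ring, hlogeq]
    simp

lemma ent_snd_le_pair {μ : Ω → ℝ} (hμ : IsPMF μ) (X : Ω → α) (Y : Ω → β) :
    ent μ Y ≤ ent μ (fun ω => (X ω, Y ω)) := by
  rw [ent_pair_expand μ X Y, ent_snd_expand μ X Y]
  rw [neg_le_neg_iff]
  apply Finset.sum_le_sum; intro v _
  apply Finset.sum_le_sum; intro w _
  by_cases h : prob μ (fun ω => (X ω, Y ω)) (v, w) = 0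
  · rw [h, zero_mul, zero_mul]
  · have hppos : 0 < prob μ (fun ω => (X ω, Y ω)) (v, w) :=
      lt_of_le_of_ne (prob_nonneg hμ.1 _ _) (Ne.symm h)
    have hle : prob μ (fun ω => (X ω, Y ω)) (v, w) ≤ prob μ Y w := by
      rw [← marg_fst μ X Y w]
      exact Finset.single_le_sum
        (f := fun i => prob μ (fun ω => (X ω, Y ω)) (i, w))
        (fun i _ => prob_nonneg hμ.1 _ _) (Finset.mem_univ v)
    apply mul_le_mul_of_nonneg_left _ hppos.le
    exact Real.logb_le_logb_of_le one_lt_two hppos hle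

lemma mi_cmi_identity (μ : Ω → ℝ) (X : Ω → α) (Y : Ω → β) (C : Ω → γ) :
    mutualInfo μ X C - mutualInfo μ X Y
      = condMutualInfo μ X C Y - condMutualInfo μ X Y C := by
  simp only [mutualInfo, condMutualInfo]
  rw [ent_pair_comm μ Y C, ent_swap23 μ X Y C]
  ring

lemma mi_chain_rule (μ : Ω → ℝ) (X : Ω → α) (B : Ω → β) (C : Ω → γ) :
    mutualInfo μ X (fun ω => (B ω, C ω)) = mutualInfo μ X B + condMutualInfo μ X C B := by
  simp only [mutualInfo, condMutualInfo]
  rw [ent_pair_comm μ B C, ent_swap23 μ X B C]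
  ring

lemma cmi_swap_identity (μ : Ω → ℝ) (X : Ω → α) (B : Ω → β) (C : Ω → γ) :
    condMutualInfo μ X C B - mutualInfo μ X C
      = condMutualInfo μ B C X - mutualInfo μ B C := by
  simp only [mutualInfo, condMutualInfo]
  rw [ent_pair_comm μ X B, ent_pair_comm μ X C, ent_pair_comm μ B C, ent_swap13 μ X C B]
  ring

end Aux

/-- For the triangle causal structure,
P(x,y,z,a,b,c) = P(x|b,c)·P(y|a,c)·P(z|a,b)·P(a)·P(b)·P(c),
the observed variables satisfy I(X:Y) + I(X:Z) ≤ H(X). -/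
theorem triangle_entropic_inequality
    {Ω x y z a b c : Type} [Fintype Ω] [Fintype x] [Fintype y] [Fintype z]
    [Fintype a] [Fintype b] [Fintype c]
    [DecidableEq x] [DecidableEq y] [DecidableEq z]
    [DecidableEq a] [DecidableEq b] [DecidableEq c]
    (μ : Ω → ℝ) (hμ : IsPMF μ)
    (X : Ω → x) (Y : Ω → y) (Z : Ω → z) (A : Ω → a) (B : Ω → b) (C : Ω → c)
    (qX : b → c → x → ℝ) (qY : a → c → y → ℝ) (qZ : a → b → z → ℝ)
    (hqX0 : ∀ bv cv xv, 0 ≤ qX bv cv xv) (hqX1 : ∀ bv cv, ∑ xv, qX bv cv xv = 1)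
    (hqY0 : ∀ av cv yv, 0 ≤ qY av cv yv) (hqY1 : ∀ av cv, ∑ yv, qY av cv yv = 1)
    (hqZ0 : ∀ av bv zv, 0 ≤ qZ av bv zv) (hqZ1 : ∀ av bv, ∑ zv, qZ av bv zv = 1)
    (hfact : ∀ (xv : x) (yv : y) (zv : z) (av : a) (bv : b) (cv : c),
      prob μ (fun ω => (X ω, Y ω, Z ω, A ω, B ω, C ω)) (xv, yv, zv, av, bv, cv)
        = qX bv cv xv * qY av cv yv * qZ av bv zv
            * prob μ A av * prob μ B bv * prob μ C cv) :
    mutualInfo μ X Y + mutualInfo μ X Z ≤ ent μ X := by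
  -- marginal closed forms
  have M1 : ∀ xv yv cv, prob μ (fun ω => (X ω, Y ω, C ω)) (xv, yv, cv)
      = (∑ bv, qX bv cv xv * prob μ B bv) * ((∑ av, qY av cv yv * prob μ A av)
          * prob μ C cv) := by
    intro xv yv cv
    have h := prob_map μ (fun ω => (X ω, Y ω, Z ω, A ω, B ω, C ω))
      (fun s => (s.1, s.2.1, s.2.2.2.2.2)) (xv, yv, cv)
    rw [show prob μ (fun ω => (X ω, Y ω, C ω)) (xv, yv, cv)
      = prob μ (fun ω => ((fun s : x × y × z × a × b × c => (s.1, s.2.1, s.2.2.2.2.2))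
          ((X ω, Y ω, Z ω, A ω, B ω, C ω)))) (xv, yv, cv)
      from prob_iff_congr (fun ω => Iff.rfl), h]
    simp only [Fintype.sum_prod_type, Prod.mk.injEq, ite_and, Finset.sum_ite_irrel,
      Finset.sum_ite_eq', Finset.mem_univ, if_true, Finset.sum_const_zero]
    simp only [hfact]
    rw [sum_rot3' (fun a' b' z' => qX b' cv xv * qY a' cv yv * qZ a' b' z'
        * prob μ A a' * prob μ B b' * prob μ C cv)]
    have hz : ∀ (a' : a) (b' : b), (∑ z', qX b' cv xv * qY a' cv yv * qZ a' b' z'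
        * prob μ A a' * prob μ B b' * prob μ C cv)
        = qX b' cv xv * qY a' cv yv * prob μ A a' * prob μ B b' * prob μ C cv := by
      intro a' b'
      rw [← Finset.sum_mul, ← Finset.sum_mul, ← Finset.sum_mul, ← Finset.mul_sum,
        hqZ1 a' b', mul_one]
    simp only [hz]
    rw [Finset.sum_comm, Finset.sum_mul]
    apply Finset.sum_congr rfl; intro b' _
    rw [Finset.sum_mul, Finset.mul_sum]
    apply Finset.sum_congr rfl; intro a' _
    ring
  have M2 : ∀ xv cv, prob μ (fun ω => (X ω, C ω)) (xv, cv)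
      = (∑ bv, qX bv cv xv * prob μ B bv) * prob μ C cv := by
    intro xv cv
    rw [marg_mid μ X Y C xv cv]
    simp only [M1]
    rw [← Finset.mul_sum, ← Finset.sum_mul, Finset.sum_comm]
    have hy : ∀ a' : a, ∑ y', qY a' cv y' * prob μ A a' = prob μ A a' := by
      intro a'; rw [← Finset.sum_mul, hqY1, one_mul]
    simp only [hy]
    rw [sum_prob hμ A, one_mul]
  have M3 : ∀ yv cv, prob μ (fun ω => (Y ω, C ω)) (yv, cv)
      = (∑ av, qY av cv yv * prob μ A av) * prob μ C cv := by
    intro yv cv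
    rw [← marg_fst μ X (fun ω => (Y ω, C ω)) (yv, cv)]
    simp only [M1]
    rw [← Finset.sum_mul, Finset.sum_comm]
    have hx : ∀ b' : b, ∑ x', qX b' cv x' * prob μ B b' = prob μ B b' := by
      intro b'; rw [← Finset.sum_mul, hqX1, one_mul]
    simp only [hx]
    rw [sum_prob hμ B, one_mul]
  have M4 : ∀ xv zv bv, prob μ (fun ω => (X ω, Z ω, B ω)) (xv, zv, bv)
      = (∑ cv, qX bv cv xv * prob μ C cv) * ((∑ av, qZ av bv zv * prob μ A av)
          * prob μ B bv) := by
    intro xv zv bv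
    have h := prob_map μ (fun ω => (X ω, Y ω, Z ω, A ω, B ω, C ω))
      (fun s => (s.1, s.2.2.1, s.2.2.2.2.1)) (xv, zv, bv)
    rw [show prob μ (fun ω => (X ω, Z ω, B ω)) (xv, zv, bv)
      = prob μ (fun ω => ((fun s : x × y × z × a × b × c => (s.1, s.2.2.1, s.2.2.2.2.1))
          ((X ω, Y ω, Z ω, A ω, B ω, C ω)))) (xv, zv, bv)
      from prob_iff_congr (fun ω => Iff.rfl), h]
    simp only [Fintype.sum_prod_type, Prod.mk.injEq, ite_and, Finset.sum_ite_irrel,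
      Finset.sum_ite_eq', Finset.mem_univ, if_true, Finset.sum_const_zero]
    simp only [hfact]
    have hbc : ∀ (y' : y) (a' : a), (∑ b', ∑ c', if b' = bv then qX b' c' xv * qY a' c' y'
        * qZ a' b' zv * prob μ A a' * prob μ B b' * prob μ C c' else 0)
        = ∑ c', qX bv c' xv * qY a' c' y' * qZ a' bv zv
            * prob μ A a' * prob μ B bv * prob μ C c' := by
      intro y' a'
      rw [Finset.sum_comm]
      simp [Finset.sum_ite_eq, Finset.sum_ite_eq']
    simp only [hbc]
    rw [sum_rot3' (fun a' c' y' => qX bv c' xv * qY a' c' y' * qZ a' bv zv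
        * prob μ A a' * prob μ B bv * prob μ C c')]
    have hy : ∀ (a' : a) (c' : c), (∑ y', qX bv c' xv * qY a' c' y' * qZ a' bv zv
        * prob μ A a' * prob μ B bv * prob μ C c')
        = qX bv c' xv * qZ a' bv zv * prob μ A a' * prob μ B bv * prob μ C c' := by
      intro a' c'
      rw [show (∑ y', qX bv c' xv * qY a' c' y' * qZ a' bv zv
          * prob μ A a' * prob μ B bv * prob μ C c')
        = (∑ y', qY a' c' y') * (qX bv c' xv * qZ a' bv zv
          * prob μ A a' * prob μ B bv * prob μ C c') by
          rw [Finset.sum_mul]; apply Finset.sum_congr rfl; intro y' _; ring]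
      rw [hqY1 a' c', one_mul]
    simp only [hy]
    rw [Finset.sum_comm, Finset.sum_mul]
    apply Finset.sum_congr rfl; intro c' _
    rw [Finset.sum_mul, Finset.mul_sum]
    apply Finset.sum_congr rfl; intro a' _
    ring
  have M5 : ∀ xv bv, prob μ (fun ω => (X ω, B ω)) (xv, bv)
      = (∑ cv, qX bv cv xv * prob μ C cv) * prob μ B bv := by
    intro xv bv
    rw [marg_mid μ X Z B xv bv]
    simp only [M4]
    rw [← Finset.mul_sum, ← Finset.sum_mul, Finset.sum_comm]
    have hz : ∀ a' : a, ∑ z', qZ a' bv z' * prob μ A a' = prob μ A a' := by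
      intro a'; rw [← Finset.sum_mul, hqZ1, one_mul]
    simp only [hz]
    rw [sum_prob hμ A, one_mul]
  have M6 : ∀ zv bv, prob μ (fun ω => (Z ω, B ω)) (zv, bv)
      = (∑ av, qZ av bv zv * prob μ A av) * prob μ B bv := by
    intro zv bv
    rw [← marg_fst μ X (fun ω => (Z ω, B ω)) (zv, bv)]
    simp only [M4]
    rw [← Finset.sum_mul, Finset.sum_comm]
    have hx : ∀ c' : c, ∑ x', qX bv c' x' * prob μ C c' = prob μ C c' := by
      intro c'; rw [← Finset.sum_mul, hqX1, one_mul]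
    simp only [hx]
    rw [sum_prob hμ C, one_mul]
  have M7 : ∀ bv cv, prob μ (fun ω => (B ω, C ω)) (bv, cv)
      = prob μ B bv * prob μ C cv := by
    intro bv cv
    have h := prob_map μ (fun ω => (X ω, Y ω, Z ω, A ω, B ω, C ω))
      (fun s => (s.2.2.2.2.1, s.2.2.2.2.2)) (bv, cv)
    rw [show prob μ (fun ω => (B ω, C ω)) (bv, cv)
      = prob μ (fun ω => ((fun s : x × y × z × a × b × c => (s.2.2.2.2.1, s.2.2.2.2.2))
          ((X ω, Y ω, Z ω, A ω, B ω, C ω)))) (bv, cv)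
      from prob_iff_congr (fun ω => Iff.rfl), h]
    simp only [Fintype.sum_prod_type, Prod.mk.injEq, ite_and, Finset.sum_ite_irrel,
      Finset.sum_ite_eq', Finset.mem_univ, if_true, Finset.sum_const_zero]
    simp only [hfact]
    have hz : ∀ (x' : x) (y' : y) (a' : a), (∑ z', qX bv cv x' * qY a' cv y' * qZ a' bv z'
        * prob μ A a' * prob μ B bv * prob μ C cv)
        = qX bv cv x' * qY a' cv y' * prob μ A a' * prob μ B bv * prob μ C cv := by
      intro x' y' a'
      rw [show (∑ z', qX bv cv x' * qY a' cv y' * qZ a' bv z'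
          * prob μ A a' * prob μ B bv * prob μ C cv)
        = (∑ z', qZ a' bv z') * (qX bv cv x' * qY a' cv y'
          * prob μ A a' * prob μ B bv * prob μ C cv) by
          rw [Finset.sum_mul]; apply Finset.sum_congr rfl; intro z' _; ring]
      rw [hqZ1 a' bv, one_mul]
    have h1 : ∀ (x' : x) (y' : y), (∑ z', ∑ a', qX bv cv x' * qY a' cv y' * qZ a' bv z'
        * prob μ A a' * prob μ B bv * prob μ C cv)
        = ∑ a', qX bv cv x' * qY a' cv y' * prob μ A a' * prob μ B bv * prob μ C cv := by
      intro x' y'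
      rw [Finset.sum_comm]
      apply Finset.sum_congr rfl; intro a' _
      exact hz x' y' a'
    simp only [h1]
    have h2 : ∀ (x' : x), (∑ y', ∑ a', qX bv cv x' * qY a' cv y'
        * prob μ A a' * prob μ B bv * prob μ C cv)
        = ∑ a', qX bv cv x' * prob μ A a' * prob μ B bv * prob μ C cv := by
      intro x'
      rw [Finset.sum_comm]
      apply Finset.sum_congr rfl; intro a' _
      rw [show (∑ y', qX bv cv x' * qY a' cv y' * prob μ A a' * prob μ B bv * prob μ C cv)
        = (∑ y', qY a' cv y') * (qX bv cv x' * prob μ A a' * prob μ B bv * prob μ C cv) by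
          rw [Finset.sum_mul]; apply Finset.sum_congr rfl; intro y' _; ring,
        hqY1 a' cv, one_mul]
    simp only [h2]
    rw [Finset.sum_comm]
    have h3 : ∀ (a' : a), (∑ x', qX bv cv x' * prob μ A a' * prob μ B bv * prob μ C cv)
        = prob μ A a' * prob μ B bv * prob μ C cv := by
      intro a'
      rw [← Finset.sum_mul, ← Finset.sum_mul, ← Finset.sum_mul, hqX1 bv cv, one_mul]
    simp only [h3]
    rw [← Finset.sum_mul, ← Finset.sum_mul, sum_prob hμ A, one_mul]
  -- conditional independences
  have hCI1 : condMutualInfo μ X Y C = 0 := by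
    apply condMutualInfo_eq_zero_of_condIndep hμ
    intro v w u
    rw [M1, M2, M3]
    ring
  have hCI2 : condMutualInfo μ X Z B = 0 := by
    apply condMutualInfo_eq_zero_of_condIndep hμ
    intro v w u
    rw [M4, M5, M6]
    ring
  have hBC : mutualInfo μ B C = 0 := by
    apply mutualInfo_eq_zero_of_indep
    intro v w
    exact M7 v w
  -- inequality chain
  have h1 : mutualInfo μ X Y ≤ mutualInfo μ X C := by
    have hid := mi_cmi_identity μ X Y C
    have h2 := condMutualInfo_nonneg hμ X C Y
    linarith
  have h2 : mutualInfo μ X Z ≤ mutualInfo μ X B := by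
    have hid := mi_cmi_identity μ X Z B
    have h3 := condMutualInfo_nonneg hμ X B Z
    linarith
  have h3 : mutualInfo μ X C ≤ condMutualInfo μ X C B := by
    have hid := cmi_swap_identity μ X B C
    have h4 := condMutualInfo_nonneg hμ B C X
    linarith
  have h4 : mutualInfo μ X B + condMutualInfo μ X C B
      = mutualInfo μ X (fun ω => (B ω, C ω)) := (mi_chain_rule μ X B C).symm
  have h5 : mutualInfo μ X (fun ω => (B ω, C ω)) ≤ ent μ X := by
    have h6 := ent_snd_le_pair hμ X (fun ω => (B ω, C ω))
    simp only [mutualInfo]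
    linarith
  linarith
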